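/- Assume the line condition r₁·d − d₁·r = g (with r = r₁ + r₂, d = d₁ + d₂, g = gcd(r, d)). Let r₁′, d₁′, r₂′, d₂′ be integers with 0 < r₁′ ≤ r₁, 0 < r₂′ ≤ r₂, d₁′·r₁ ≤ d₁·r₁′, and m := r₂′·d₂ − r₂·d₂′ ≥ 1. Then (d₁′ + d₂′)/(r₁′ + r₂′) < d/r in ℚ. -/

import Mathlib

/-- Main computation in the converse direction of Lemma 2.2: for subsheaves
V₁′ ⊂ V₁ (rank r₁′, degree d₁′, with μ(V₁′) ≤ μ(V₁)) and a proper
subsheaf V₂′ ⊂ V₂ (rank r₂′, degree d₂′, with m = r₂′·d₂ − r₂·d₂′ ≥ 1),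
the induced subsheaf V′ of V has μ(V′) < μ(V). -/
theorem induced_sub_slope (r₁ r₂ d₁ d₂ r d g : ℤ)
    (hr₁ : 0 < r₁) (hr₂ : 0 < r₂)
    (hr : r = r₁ + r₂) (hd : d = d₁ + d₂)
    (hg : g = Int.gcd r d)
    (hline : r₁ * d - d₁ * r = g)
    (r₁' d₁' r₂' d₂' m : ℤ)
    (hr₁'pos : 0 < r₁') (hr₁'le : r₁' ≤ r₁)
    (hr₂'pos : 0 < r₂') (hr₂'le : r₂' ≤ r₂)
    (hsub1 : d₁' * r₁ ≤ d₁ * r₁')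
    (hm : m = r₂' * d₂ - r₂ * d₂') (hm1 : 1 ≤ m) :
    ((d₁' + d₂' : ℚ)) / ((r₁' + r₂' : ℚ)) < (d : ℚ) / r := by
  have hrpos : 0 < r := by linarith
  have hg1 : 1 ≤ g := by
    have : 0 < Int.gcd r d := Int.gcd_pos_of_ne_zero_left d (by linarith)
    omega
  have hgr : g ∣ r := by rw [hg]; exact Int.gcd_dvd_left r d
  have hgd : g ∣ d := by rw [hg]; exact Int.gcd_dvd_right r d
  -- second form of the line condition
  have hline2 : d₂ * r - r₂ * d = g := by
    subst hr hd; linarith [hline]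
  set t : ℤ := d * r₂' - d₂' * r with ht_def
  have hdvdt : g ∣ t := Dvd.dvd.sub (hgd.mul_right _) (hgr.mul_left _)
  have hkey : m * r = r₂ * t + r₂' * g := by
    rw [ht_def]; linear_combination r * hm + r₂' * hline2
  have htnn : 0 ≤ t := by
    by_contra hneg
    push_neg at hneg
    have hle : g ≤ -t := Int.le_of_dvd (by linarith) (dvd_neg.mpr hdvdt)
    have h1 : m * r ≤ r₂ * (-g) + r₂' * g := by nlinarith
    nlinarith
  -- key inequality from stability of V₁
  have h1 : r₁' * g ≤ r₁ * d * r₁' - r₁ * d₁' * r := by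
    have h2 : d₁' * r₁ * r ≤ d₁ * r₁' * r :=
      mul_le_mul_of_nonneg_right hsub1 hrpos.le
    nlinarith [hline]
  have hid : r₁ * r₂ * (d * (r₁' + r₂') - (d₁' + d₂') * r)
      = r₂ * (r₁ * d * r₁' - r₁ * d₁' * r) + r₁ * r₂ * t := by
    rw [ht_def]; ring
  have hprod : 0 < r₁ * r₂ * (d * (r₁' + r₂') - (d₁' + d₂') * r) := by
    rw [hid]
    have hb : r₂ * (r₁' * g) ≤ r₂ * (r₁ * d * r₁' - r₁ * d₁' * r) :=
      mul_le_mul_of_nonneg_left h1 hr₂.le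
    have hc : 0 < r₂ * (r₁' * g) := mul_pos hr₂ (mul_pos hr₁'pos (by linarith))
    have hd2 : 0 ≤ r₁ * r₂ * t := mul_nonneg (mul_nonneg hr₁.le hr₂.le) htnn
    linarith
  have hE : (d₁' + d₂') * r < d * (r₁' + r₂') := by
    nlinarith [mul_pos hr₁ hr₂]
  have hr' : (0 : ℚ) < (r₁' + r₂' : ℚ) := by
    have : (0 : ℤ) < r₁' + r₂' := by linarith
    exact_mod_cast this
  have hrQ : (0 : ℚ) < (r : ℚ) := by exact_mod_cast hrpos
  rw [div_lt_div_iff₀ hr' hrQ]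
  exact_mod_cast hE
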